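/- For integers d ≥ 0, 0 ≤ l ≤ d, and 0 ≤ j ≤ d, one has ∑_{i=−1}^{j} (−1)^{j−i} C(d−i+1, j−i) · C(l+1, d−i+1) = 1 if j = d−l and 0 otherwise. -/

import Mathlib

lemma choose_factor_helper (l a m : ℕ) :
    (a + 1 + m).choose m * ((l + 1).choose (a + 1 + m)) =
      (l + 1).choose (a + 1) * (l - a).choose m := by
  by_cases h : a + 1 + m ≤ l + 1
  · have h1 : (a + 1 + m).choose m = (a + 1 + m).choose (a + 1) :=
      (Nat.choose_symm_add).symm
    have h2 := Nat.choose_mul (n := l + 1) (k := a + 1 + m) (s := a + 1)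
      (Nat.le_add_right _ _)
    have e1 : l + 1 - (a + 1) = l - a := by omega
    have e2 : a + 1 + m - (a + 1) = m := by omega
    rw [e1, e2] at h2
    rw [h1, mul_comm, h2]
  · have h1 : (l + 1).choose (a + 1 + m) = 0 := Nat.choose_eq_zero_of_lt (by omega)
    rw [h1, mul_zero]
    by_cases h2 : a + 1 ≤ l + 1
    · have : (l - a).choose m = 0 := Nat.choose_eq_zero_of_lt (by omega)
      rw [this, mul_zero]
    · have : (l + 1).choose (a + 1) = 0 := Nat.choose_eq_zero_of_lt (by omega)
      rw [this, zero_mul]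

theorem alternating_sum_choose_mul_choose_eq_ite (d l j : ℕ) (hl : l ≤ d) (hj : j ≤ d) :
    ∑ k ∈ Finset.range (j + 2),
        (-1 : ℤ) ^ (j + 1 - k) * ((d + 2 - k).choose (j + 1 - k)) *
          ((l + 1).choose (d + 2 - k)) =
      if j = d - l then 1 else 0 := by
  set a := d - j with ha
  set N := l - a with hN
  have key : ∑ k ∈ Finset.range (j + 2),
      (-1 : ℤ) ^ (j + 1 - k) * ((d + 2 - k).choose (j + 1 - k)) *
        ((l + 1).choose (d + 2 - k)) =
      ∑ m ∈ Finset.range (j + 2),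
        ((l + 1).choose (a + 1) : ℤ) * ((-1) ^ m * (N.choose m)) := by
    rw [← Finset.sum_range_reflect]
    apply Finset.sum_congr rfl
    intro m hm
    have hm' : m < j + 2 := Finset.mem_range.mp hm
    have e1 : j + 1 - (j + 2 - 1 - m) = m := by omega
    have e2 : d + 2 - (j + 2 - 1 - m) = a + 1 + m := by omega
    rw [e1, e2]
    have hc : ((a + 1 + m).choose m : ℤ) * ((l + 1).choose (a + 1 + m)) =
        ((l + 1).choose (a + 1) : ℤ) * (N.choose m) := by
      exact_mod_cast choose_factor_helper l a m
    rw [mul_assoc, hc]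
    ring
  rw [key, ← Finset.mul_sum]
  have hNj : N + 1 ≤ j + 2 := by omega
  have hsum : ∑ m ∈ Finset.range (j + 2), ((-1 : ℤ)) ^ m * (N.choose m) =
      if N = 0 then 1 else 0 := by
    rw [← Int.alternating_sum_range_choose]
    symm
    apply Finset.sum_subset (Finset.range_subset_range.mpr hNj)
    intro x _ hx
    have : N < x := by simp at hx ⊢; omega
    rw [Nat.choose_eq_zero_of_lt this]
    simp
  rw [hsum]
  by_cases hcase : j = d - l
  · have haN : a = l := by omega
    have : N = 0 := by omega
    rw [if_pos this, if_pos hcase, haN, Nat.choose_self]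
    simp
  · rw [if_neg hcase]
    by_cases hN0 : N = 0
    · have hla : l < a := by omega
      rw [if_pos hN0, Nat.choose_eq_zero_of_lt (by omega)]
      simp
    · rw [if_neg hN0, mul_zero]
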